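/- Let s ≥ 2 and n = 2s − 1. Then the generating polynomial for μ = 2 satisfies, identically in ω ∈ ℝ and z ∈ ℂ: G_n(ω,2;z) = (−1)^{s+1} r_s(ω) · z · R_{s−1}(ω; z²). -/

import Mathlib

/-- σ_k: σ_0 = ω, σ_{±μ} = 1, σ_k = 0 otherwise. -/
noncomputable def sig (μ : ℕ) (ω : ℝ) : ℤ → ℂ :=
  fun l => if l = 0 then (ω : ℂ) else if l = (μ : ℤ) ∨ l = -(μ : ℤ) then 1 else 0

/-- The (n+1)×(n+1) matrix defining the generating polynomial G_n(ω,μ;z). -/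
noncomputable def Gmat (n μ : ℕ) (ω : ℝ) : Matrix (Fin (n + 1)) (Fin (n + 1)) (Polynomial ℂ) :=
  Matrix.of fun i j =>
    if (i : ℕ) = 0 then Polynomial.X ^ (j : ℕ)
    else Polynomial.C (sig μ ω ((j : ℤ) - (n : ℤ) + (i : ℤ)))

/-- The generating polynomial G_n(ω,μ;·) as a polynomial in z. -/
noncomputable def Gpoly (n μ : ℕ) (ω : ℝ) : Polynomial ℂ := (Gmat n μ ω).det

/-- r_{-1} = 0, r_0 = 1, r_k(ω) = -ω r_{k-1}(ω) - r_{k-2}(ω); r_k(ω) = (-1)^k U_k(ω/2). -/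
def chebr : ℕ → ℝ → ℝ
  | 0 => fun _ => 1
  | 1 => fun ω => -ω
  | (k + 2) => fun ω => -ω * chebr (k + 1) ω - chebr k ω


open Matrix Equiv



noncomputable def band (ω : ℝ) (i j : ℕ) : ℂ :=
  if i = j then (ω : ℂ) else if i + 1 = j ∨ j + 1 = i then 1 else 0

def Dr : ℕ → ℝ → ℝ
  | 0 => fun _ => 1
  | 1 => fun ω => ω
  | (k + 2) => fun ω => ω * Dr (k + 1) ω - Dr k ω

lemma band_shift (ω : ℝ) (a b : ℕ) : band ω (a + 1) (b + 1) = band ω a b := by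
  simp only [band]
  split_ifs <;> first | rfl | (exfalso; omega) | (exfalso; casesm* _ ∨ _, False <;> omega)

lemma succAbove_val {m : ℕ} (c : Fin (m + 1)) (j : Fin m) :
    ((c.succAbove j : Fin (m + 1)) : ℕ) = if (j : ℕ) < (c : ℕ) then (j : ℕ) else (j : ℕ) + 1 := by
  rw [Fin.succAbove]
  split_ifs with h1 h2 h2 <;>
    simp_all [Fin.lt_def, Fin.castSucc, Fin.castAdd, Fin.castLE]

noncomputable def Em (ω : ℝ) (m : ℕ) (c : Fin (m + 1)) : Matrix (Fin m) (Fin m) ℂ :=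
  Matrix.of fun i j => band ω i (c.succAbove j)

lemma Em_apply (ω : ℝ) (m : ℕ) (c : Fin (m + 1)) (i j : Fin m) :
    Em ω m c i j = band ω i (if (j : ℕ) < (c : ℕ) then (j : ℕ) else (j : ℕ) + 1) := by
  rw [Em, Matrix.of_apply, succAbove_val]

lemma det_Em (ω : ℝ) : ∀ (m : ℕ) (c : Fin (m + 1)),
    (Em ω m c).det = ((Dr (c : ℕ) ω : ℝ) : ℂ) := by
  intro m
  induction m using Nat.strong_induction_on with
  | _ m IH =>
  intro c
  match m with
  | 0 =>
    have hc : (c : ℕ) = 0 := by omega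
    rw [Matrix.det_fin_zero, hc]
    simp [Dr]
  | (m' + 1) =>
    by_cases hc0 : (c : ℕ) = 0
    · rw [det_of_lowerTriangular _ ?tri]
      case tri =>
        intro i j h
        have hij' : i < j := OrderDual.toDual_lt_toDual.mp h
        have hij : (i : ℕ) < (j : ℕ) := hij'
        rw [Em_apply, if_neg (by omega)]
        unfold band
        rw [if_neg (by omega), if_neg (by omega)]
      have hdiag : ∀ i : Fin (m' + 1), Em ω (m' + 1) c i i = 1 := by
        intro i
        rw [Em_apply, if_neg (by omega)]
        unfold band
        rw [if_neg (by omega), if_pos (by omega)]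
      rw [hc0]
      simp [hdiag, Dr]
    · -- c ≥ 1
      have hc1 : 1 ≤ (c : ℕ) := by omega
      rw [det_succ_column_zero, Fin.sum_univ_succ]
      -- first term
      have hM0 : (Em ω (m' + 1) c).submatrix Fin.succ Fin.succ
          = Em ω m' ⟨(c : ℕ) - 1, by omega⟩ := by
        ext i j
        rw [Matrix.submatrix_apply, Em_apply, Em_apply]
        simp only [Fin.val_succ]
        by_cases h : (j : ℕ) < (c : ℕ) - 1
        · rw [if_pos (by omega), if_pos (by simpa using h)]
          exact band_shift ω i j
        · rw [if_neg (by omega), if_neg (by simpa using h)]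
          exact band_shift ω i (j + 1)
      have h00 : Em ω (m' + 1) c 0 0 = (ω : ℂ) := by
        rw [Em_apply]
        simp only [Fin.val_zero]
        simp only [show 0 < (c : ℕ) by omega, if_true]
        unfold band
        rw [if_pos rfl]
      have hfirst : (-1 : ℂ) ^ ((0 : Fin (m' + 1)) : ℕ) * Em ω (m' + 1) c 0 0 *
            ((Em ω (m' + 1) c).submatrix (Fin.succAbove 0) Fin.succ).det
          = (ω : ℂ) * ((Dr ((c : ℕ) - 1) ω : ℝ) : ℂ) := by
        rw [Fin.succAbove_zero, hM0, IH m' (by omega), h00]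
        simp
      rw [hfirst]
      cases m' with
      | zero =>
        have hc : (c : ℕ) = 1 := by omega
        rw [hc]
        simp [Dr]
      | succ m'' =>
        rw [Fin.sum_univ_succ]
        have htail : ∀ i : Fin m'',
            (-1 : ℂ) ^ ((i.succ.succ : Fin (m'' + 2)) : ℕ) * Em ω (m'' + 2) c i.succ.succ 0 *
              ((Em ω (m'' + 2) c).submatrix i.succ.succ.succAbove Fin.succ).det = 0 := by
          intro i
          have hz : Em ω (m'' + 2) c i.succ.succ 0 = 0 := by
            rw [Em_apply]
            simp only [Fin.val_zero, Fin.val_succ]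
            simp only [show 0 < (c : ℕ) by omega, if_true]
            unfold band
            rw [if_neg (by omega), if_neg (by omega)]
          rw [hz]; ring
        rw [Finset.sum_eq_zero fun i _ => htail i, add_zero]
        have h10 : Em ω (m'' + 2) c (0 : Fin (m'' + 1)).succ 0 = 1 := by
          rw [Em_apply]
          simp only [Fin.val_zero, Fin.val_succ]
          simp only [show 0 < (c : ℕ) by omega, if_true]
          unfold band
          rw [if_neg (by omega), if_pos (by omega)]
        rw [h10]
        by_cases hc2 : (c : ℕ) = 1
        · have hdet0 : ((Em ω (m'' + 1 + 1) c).submatrix (Fin.succ 0).succAbove Fin.succ).det = 0 := by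
            apply Matrix.det_eq_zero_of_row_eq_zero 0
            intro j
            simp only [Matrix.submatrix_apply, Em_apply, succAbove_val, Fin.val_succ, Fin.val_zero]
            dsimp +instances -failIfUnchanged only [Fin.val_zero, Fin.val_succ]
            have hcb := c.isLt
            have hjb := j.isLt
            unfold band
            split_ifs <;> first | rfl | (exfalso; omega) | (exfalso; casesm* _ ∨ _, False <;> omega)
          rw [hdet0, hc2]
          simp [Dr]
        · -- c ≥ 2
          have hc2' : 2 ≤ (c : ℕ) := by omega
          set M₁ := (Em ω (m'' + 1 + 1) c).submatrix (Fin.succ 0).succAbove Fin.succ with hM₁def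
          have hM2 : M₁.submatrix Fin.succ Fin.succ = Em ω m'' ⟨(c : ℕ) - 2, by omega⟩ := by
            ext i j
            simp only [hM₁def, Matrix.submatrix_apply, Em_apply, succAbove_val, Fin.val_succ,
              Fin.val_zero]
            dsimp +instances -failIfUnchanged only [Fin.val_zero, Fin.val_succ]
            have hcb := c.isLt
            have hib := i.isLt
            have hjb := j.isLt
            unfold band
            split_ifs <;> first | rfl | (exfalso; omega) | (exfalso; casesm* _ ∨ _, False <;> omega)
          have h100 : M₁ 0 0 = 1 := by
            simp only [hM₁def, Matrix.submatrix_apply, Em_apply, succAbove_val, Fin.val_succ,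
              Fin.val_zero]
            dsimp +instances -failIfUnchanged only [Fin.val_zero, Fin.val_succ]
            have hcb := c.isLt
            unfold band
            split_ifs <;> first | rfl | (exfalso; omega) | (exfalso; casesm* _ ∨ _, False <;> omega)
          have htail2 : ∀ j : Fin m'',
              (-1 : ℂ) ^ ((j.succ : Fin (m'' + 1)) : ℕ) * M₁ 0 j.succ *
                (M₁.submatrix Fin.succ j.succ.succAbove).det = 0 := by
            intro j
            have hz : M₁ 0 j.succ = 0 := by
              simp only [hM₁def, Matrix.submatrix_apply, Em_apply, succAbove_val, Fin.val_succ,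
                Fin.val_zero]
              dsimp +instances -failIfUnchanged only [Fin.val_zero, Fin.val_succ]
              have hcb := c.isLt
              have hjb := j.isLt
              unfold band
              split_ifs <;> first | rfl | (exfalso; omega) | (exfalso; casesm* _ ∨ _, False <;> omega)
            rw [hz]; ring
          have hM1 : M₁.det = ((Dr ((c : ℕ) - 2) ω : ℝ) : ℂ) := by
            rw [det_succ_row_zero, Fin.sum_univ_succ,
              Finset.sum_eq_zero fun j _ => htail2 j, add_zero, h100, Fin.succAbove_zero,
              hM2, IH m'' (by omega)]
            simp
          rw [hM1]
          obtain ⟨k, hk⟩ : ∃ k, (c : ℕ) = k + 2 := ⟨(c : ℕ) - 2, by omega⟩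
          rw [hk, show k + 2 - 1 = k + 1 from by omega]
          simp only [Dr, Fin.val_succ, Fin.val_zero]
          push_cast
          ring

noncomputable def Tm (ω : ℝ) (m : ℕ) : Matrix (Fin m) (Fin m) ℂ :=
  Matrix.of fun i j => band ω i j

lemma det_Tm (ω : ℝ) (m : ℕ) : (Tm ω m).det = ((Dr m ω : ℝ) : ℂ) := by
  have h : Tm ω m = Em ω m (Fin.last m) := by
    ext i j
    rw [Tm, Matrix.of_apply, Em_apply, if_pos (by simpa [Fin.last] using j.isLt)]
  rw [h, det_Em]
  simp [Fin.last]

noncomputable def Qm (ω : ℝ) (z : ℂ) (m : ℕ) : Matrix (Fin (m + 1)) (Fin (m + 1)) ℂ :=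
  Matrix.of fun a c => if (a : ℕ) = m then z ^ (2 * (c : ℕ) + 1) else band ω a c

lemma det_Qm (ω : ℝ) (z : ℂ) (m : ℕ) :
    (Qm ω z m).det = ∑ c : Fin (m + 1),
      (-1) ^ (m + (c : ℕ)) * z ^ (2 * (c : ℕ) + 1) * ((Dr (c : ℕ) ω : ℝ) : ℂ) := by
  rw [det_succ_row _ (Fin.last m)]
  refine Finset.sum_congr rfl fun c _ => ?_
  have h1 : Qm ω z m (Fin.last m) c = z ^ (2 * (c : ℕ) + 1) := by
    rw [Qm, Matrix.of_apply, if_pos (Fin.val_last m)]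
  have h2 : (Qm ω z m).submatrix (Fin.last m).succAbove c.succAbove = Em ω m c := by
    ext i j
    rw [Matrix.submatrix_apply, Fin.succAbove_last, Qm, Matrix.of_apply,
      if_neg (by simpa using i.isLt.ne), Em_apply]
    simp only [Fin.coe_castSucc, succAbove_val]
  rw [h1, h2, det_Em]
  simp only [Fin.val_last]

lemma sign_sumComm (s : ℕ) :
    Equiv.Perm.sign (Equiv.sumComm (Fin s) (Fin s)) = (-1) ^ s := by
  classical
  let e : Fin s × Bool ≃ Fin s ⊕ Fin s :=
    { toFun := fun x => match x with
        | (i, false) => Sum.inl i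
        | (i, true) => Sum.inr i
      invFun := Sum.elim (fun i => (i, false)) (fun i => (i, true))
      left_inv := by rintro ⟨i, (_ | _)⟩ <;> rfl
      right_inv := by rintro (i | i) <;> rfl }
  let q : Equiv.Perm (Fin s × Bool) :=
    Equiv.prodCongrRight (fun _ : Fin s => Equiv.swap false true)
  have h : ∀ x, (Equiv.sumComm (Fin s) (Fin s)) (e x) = e (q x) := by
    rintro ⟨i, (_ | _)⟩ <;>
      simp [e, q, Equiv.prodCongrRight_apply, Equiv.swap_apply_left, Equiv.swap_apply_right]
  have := Equiv.Perm.sign_eq_sign_of_equiv q (Equiv.sumComm (Fin s) (Fin s)) e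
    (fun x => (h x).symm)
  rw [← this, Equiv.Perm.sign_prodCongrRight]
  simp [Equiv.Perm.sign_swap]

lemma det_PQ (s : ℕ) (P Q A : Matrix (Fin s) (Fin s) ℂ) :
    (Matrix.fromBlocks P Q A 0).det = (-1) ^ s * (A.det * Q.det) := by
  have h : Matrix.fromBlocks P Q A (0 : Matrix (Fin s) (Fin s) ℂ)
      = (Matrix.fromBlocks A 0 P Q).submatrix (Equiv.sumComm (Fin s) (Fin s)) id := by
    ext i j
    rcases i with i | i <;> rcases j with j | j <;> rfl
  rw [h, det_permute, det_fromBlocks_zero₁₂, sign_sumComm]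
  push_cast
  ring


lemma chebr_eq_Dr : ∀ (k : ℕ) (ω : ℝ), chebr k ω = (-1) ^ k * Dr k ω
  | 0, ω => by simp [chebr, Dr]
  | 1, ω => by simp [chebr, Dr]
  | (k + 2), ω => by
    simp only [chebr, Dr, chebr_eq_Dr (k + 1), chebr_eq_Dr k]
    ring

def eqv (m : ℕ) : Fin (m + 2) ⊕ Fin (m + 2) ≃ Fin (2 * m + 3 + 1) where
  toFun x := match x with
    | Sum.inl a => ⟨2 * (m + 1 - (a : ℕ)), by have := a.isLt; omega⟩
    | Sum.inr b => ⟨2 * (b : ℕ) + 1, by have := b.isLt; omega⟩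
  invFun j := if (j : ℕ) % 2 = 1
    then Sum.inr ⟨(j : ℕ) / 2, by have := j.isLt; omega⟩
    else Sum.inl ⟨m + 1 - (j : ℕ) / 2, by omega⟩
  left_inv := by
    rintro (a | b) <;> dsimp only
    · rw [if_neg (by have := a.isLt; omega)]
      exact congrArg Sum.inl (Fin.ext
        (by simp only [Fin.val_mk]; have := a.isLt; omega))
    · rw [if_pos (by omega)]
      exact congrArg Sum.inr (Fin.ext (by simp only [Fin.val_mk]; omega))
  right_inv := by
    intro j
    have hj := j.isLt
    by_cases h : (j : ℕ) % 2 = 1 <;> dsimp only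
    · rw [if_pos h]
      exact Fin.ext (show 2 * ((j : ℕ) / 2) + 1 = (j : ℕ) by omega)
    · rw [if_neg h]
      exact Fin.ext (show 2 * (m + 1 - (m + 1 - (j : ℕ) / 2)) = (j : ℕ) by omega)

lemma eqv_inl (m : ℕ) (a : Fin (m + 2)) :
    ((eqv m (Sum.inl a) : Fin (2 * m + 3 + 1)) : ℕ) = 2 * (m + 1 - (a : ℕ)) := rfl

lemma eqv_inr (m : ℕ) (b : Fin (m + 2)) :
    ((eqv m (Sum.inr b) : Fin (2 * m + 3 + 1)) : ℕ) = 2 * (b : ℕ) + 1 := rfl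

/-- for n = 2s - 1 and μ = 2 the generating polynomial factorizes as
G_n(ω,2;z) = (-1)^{s+1} r_s(ω) · z · ℛ_{s-1}(ω;z²). -/
theorem stmt15 (s : ℕ) (hs : 2 ≤ s) (n : ℕ) (hn : n = 2 * s - 1) (ω : ℝ) (z : ℂ) :
    (Gpoly n 2 ω).eval z =
      (-1) ^ (s + 1) * ((chebr s ω : ℝ) : ℂ) * z *
        ∑ k ∈ Finset.range s, ((chebr k ω : ℝ) : ℂ) * z ^ (2 * k) := by
  obtain ⟨m, rfl⟩ : ∃ m, s = m + 2 := ⟨s - 2, by omega⟩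
  subst hn
  rw [show 2 * (m + 2) - 1 = 2 * m + 3 from by omega]
  have h1 : (Gpoly (2 * m + 3) 2 ω).eval z
      = ((Gmat (2 * m + 3) 2 ω).map (Polynomial.evalRingHom z)).det := by
    simpa [RingHom.mapMatrix_apply, Polynomial.coe_evalRingHom, Gpoly] using
      RingHom.map_det (Polynomial.evalRingHom z) (Gmat (2 * m + 3) 2 ω)
  set M := (Gmat (2 * m + 3) 2 ω).map (Polynomial.evalRingHom z) with hMdef
  have hdet : M.det = (M.submatrix (eqv m) (eqv m)).det :=
    (det_submatrix_equiv_self (eqv m) M).symm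
  set P : Matrix (Fin (m + 2)) (Fin (m + 2)) ℂ :=
    Matrix.of fun a a' => if (a : ℕ) = m + 1 then z ^ (2 * (m + 1 - (a' : ℕ))) else 0 with hP
  have hblocks : M.submatrix (eqv m) (eqv m)
      = Matrix.fromBlocks P (Qm ω z (m + 1)) (Tm ω (m + 2)) 0 := by
    ext i j
    rcases i with a | b <;> rcases j with a' | b'
    all_goals try have hx := a.isLt
    all_goals try have hx' := a'.isLt
    all_goals try have hy := b.isLt
    all_goals try have hy' := b'.isLt
    all_goals
      simp only [Matrix.submatrix_apply, hMdef, Matrix.map_apply, Gmat, Matrix.of_apply,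
        eqv_inl, eqv_inr, Matrix.fromBlocks, Sum.elim_inl, Sum.elim_inr, hP, Qm, Tm,
        Polynomial.coe_evalRingHom, apply_ite (Polynomial.eval z), Matrix.zero_apply,
        Polynomial.eval_pow, Polynomial.eval_X, Polynomial.eval_C]
      dsimp +instances -failIfUnchanged only [eqv_inl, eqv_inr, Fin.val_zero, Fin.val_succ]
      simp -failIfUnchanged only [apply_ite (Polynomial.eval z), Polynomial.eval_pow, Polynomial.eval_X,
        Polynomial.eval_C]
      try unfold sig
      try unfold band
      split_ifs <;> first
        | rfl
        | (exfalso; omega)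
        | (exfalso; casesm* _ ∨ _, False <;> omega)
  rw [h1, hdet, hblocks, det_PQ, det_Tm, det_Qm]
  rw [Fin.sum_univ_eq_sum_range
    (fun c => (-1 : ℂ) ^ (m + 1 + c) * z ^ (2 * c + 1) * ((Dr c ω : ℝ) : ℂ))]
  simp only [chebr_eq_Dr]
  push_cast
  rw [Finset.mul_sum, Finset.mul_sum, Finset.mul_sum]
  refine Finset.sum_congr rfl fun k hk => ?_
  ring
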